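/- Let 0 ≤ σ₀ < a < b ≤ σ̄, let E : [σ₀,σ̄] → ℝ be nonincreasing, concave on [a,b], and satisfy E(a) > E(b), and set t* := √((b−a)/(E(a)−E(b))). Let σ_FM : [0,∞) → [σ₀,σ̄] satisfy conditions (i) and (iii), suppose σ_FM(t̄) = a for some t̄ ≥ 0 with t̄ < t*, and suppose σ_FM is continuous on [t̄, t*). Then σ_FM(t) = a for every t ∈ [t̄, t*). -/

import Mathlib

open Set

/-- Claim (disc1) in the proof of Proposition 5.1: if the trajectory reaches `a` at time
`t̄ < t*` and is continuous on `[t̄, t*)`, then it stays equal to `a` on `[t̄, t*)`. -/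
theorem francfort_marigo_constancy
    (σ₀ a b σmax : ℝ) (h0 : 0 ≤ σ₀) (h1 : σ₀ < a) (h2 : a < b) (h3 : b ≤ σmax)
    (E : ℝ → ℝ)
    (hEmono : AntitoneOn E (Icc σ₀ σmax))
    (hEconc : ConcaveOn ℝ (Icc a b) E)
    (hEab : E b < E a)
    (σFM : ℝ → ℝ)
    (hmap : ∀ t, 0 ≤ t → σFM t ∈ Icc σ₀ σmax)
    (hi : MonotoneOn σFM (Ici 0))
    (hiii : ∀ s t : ℝ, 0 ≤ s → s ≤ t →
      t ^ 2 * E (σFM t) + σFM t ≤ t ^ 2 * E (σFM s) + σFM s)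
    (tbar : ℝ) (htbar : 0 ≤ tbar) (hta : σFM tbar = a)
    (htstar : tbar < Real.sqrt ((b - a) / (E a - E b)))
    (hcont : ContinuousOn σFM (Ico tbar (Real.sqrt ((b - a) / (E a - E b))))) :
    ∀ t ∈ Ico tbar (Real.sqrt ((b - a) / (E a - E b))), σFM t = a := by
  intro t ht
  have hEpos : 0 < E a - E b := by linarith
  have hba : 0 < b - a := by linarith
  have hcpos : (0:ℝ) < (b - a) / (E a - E b) := div_pos hba hEpos
  have hsq : Real.sqrt ((b - a) / (E a - E b)) ^ 2 = (b - a) / (E a - E b) :=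
    Real.sq_sqrt hcpos.le
  obtain ⟨ht1, ht2⟩ := ht
  have ht0 : 0 ≤ t := le_trans htbar ht1
  -- key : any point in [tbar, t*) with value in (a, b] gives a contradiction
  have key : ∀ s ∈ Ico tbar (Real.sqrt ((b - a) / (E a - E b))), σFM s ≤ b → σFM s ≤ a := by
    intro s hs hsb
    by_contra h
    push_neg at h
    have hs0 : 0 ≤ s := le_trans htbar hs.1
    have hiii' := hiii tbar s htbar hs.1
    rw [hta] at hiii'
    set x := σFM s with hx
    have hlam1 : (0:ℝ) ≤ (b - x) / (b - a) := by
      apply div_nonneg (by linarith) hba.le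
    have hlam2 : (0:ℝ) ≤ (x - a) / (b - a) := by
      apply div_nonneg (by linarith) hba.le
    have hlamsum : (b - x) / (b - a) + (x - a) / (b - a) = 1 := by
      field_simp
      ring
    have hconc := hEconc.2 (⟨le_refl a, h2.le⟩ : a ∈ Icc a b)
      (⟨h2.le, le_refl b⟩ : b ∈ Icc a b) hlam1 hlam2 hlamsum
    simp only [smul_eq_mul] at hconc
    have hcomb : (b - x) / (b - a) * a + (x - a) / (b - a) * b = x := by
      rw [div_mul_eq_mul_div, div_mul_eq_mul_div, ← add_div,
        div_eq_iff hba.ne']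
      ring
    rw [hcomb] at hconc
    -- E a - E x ≤ (x - a)/(b - a) * (E a - E b)
    have hEx : E a - E x ≤ (x - a) / (b - a) * (E a - E b) := by
      have : (b - x) / (b - a) * E a + (x - a) / (b - a) * E b
          = E a - (x - a) / (b - a) * (E a - E b) := by
        field_simp
        ring
      linarith [hconc, this ▸ hconc]
    -- from hiii' : x - a ≤ s^2 * (E a - E x)
    have h1' : x - a ≤ s ^ 2 * (E a - E x) := by nlinarith [hiii']
    have hs2 : s ^ 2 < (b - a) / (E a - E b) := by
      calc s ^ 2 < Real.sqrt ((b - a) / (E a - E b)) ^ 2 := by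
            exact pow_lt_pow_left₀ hs.2 hs0 (by norm_num)
        _ = (b - a) / (E a - E b) := hsq
    have hs2' : s ^ 2 * (E a - E b) < b - a := by
      rw [lt_div_iff₀ hEpos] at hs2
      linarith
    have hxa : 0 < x - a := by linarith
    -- x - a ≤ s^2 * (x-a)/(b-a) * (E a - E b) < (x - a), contradiction
    have : x - a ≤ s ^ 2 * ((x - a) / (b - a) * (E a - E b)) := by
      calc x - a ≤ s ^ 2 * (E a - E x) := h1'
        _ ≤ s ^ 2 * ((x - a) / (b - a) * (E a - E b)) := by
            apply mul_le_mul_of_nonneg_left hEx (by positivity)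
    have hlt : s ^ 2 * ((x - a) / (b - a) * (E a - E b)) < x - a := by
      have := mul_lt_mul_of_pos_left hs2' (show (0:ℝ) < (x - a)/(b-a) by positivity)
      calc s ^ 2 * ((x - a) / (b - a) * (E a - E b))
          = (x - a) / (b - a) * (s ^ 2 * (E a - E b)) := by ring
        _ < (x - a) / (b - a) * (b - a) := this
        _ = x - a := by field_simp
    linarith
  -- lower bound
  have hge : a ≤ σFM t := by
    rw [← hta]
    exact hi (mem_Ici.2 htbar) (mem_Ici.2 ht0) ht1
  -- upper bound
  have hle : σFM t ≤ a := by
    by_cases hb : σFM t ≤ b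
    · exact key t ⟨ht1, ht2⟩ hb
    · push_neg at hb
      exfalso
      have hIVT := intermediate_value_Icc ht1 (hcont.mono (Icc_subset_Ico_right ht2))
      have hbmem : b ∈ Icc (σFM tbar) (σFM t) := by
        rw [hta]; exact ⟨h2.le, hb.le⟩
      obtain ⟨s, hsmem, hsb⟩ := hIVT hbmem
      have hsIco : s ∈ Ico tbar (Real.sqrt ((b - a) / (E a - E b))) :=
        ⟨hsmem.1, lt_of_le_of_lt hsmem.2 ht2⟩
      have := key s hsIco (le_of_eq hsb)
      rw [hsb] at this
      linarith
  linarith
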